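/- One-dimensional Hawking-type bound: let K ∈ ℝ, N > 1, H₀ ∈ ℝ, and assume either (K = 0 and H₀ < 0) or (K < 0 and H₀ < −√(−K(N−1))). Let T > 0 and let h : [0,T) → ℝ be positive, satisfy the (K,N)-convexity inequality on [0,T), and possess a right derivative h'₊(0) at 0 with h'₊(0) ≤ H₀ · h(0). Then T ≤ D_{K,N,H₀}. -/

import Mathlib

noncomputable section

/-- The distortion coefficient `σ_κ^{(s)}(θ)`. -/
def sigmaCoeff (κ s θ : ℝ) : ℝ :=
  if 0 < κ then Real.sin (s * θ * Real.sqrt κ) / Real.sin (θ * Real.sqrt κ)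
  else if κ = 0 then s
  else Real.sinh (s * θ * Real.sqrt (-κ)) / Real.sinh (θ * Real.sqrt (-κ))

/-- A positive function `h` on a real interval `I` satisfies the `(K,N)`-convexity
inequality. -/
def KNConvexOn (K N : ℝ) (I : Set ℝ) (h : ℝ → ℝ) : Prop :=
  ∀ t₀ ∈ I, ∀ t₁ ∈ I, t₀ < t₁ → ∀ l ∈ Set.Icc (0 : ℝ) 1,
    sigmaCoeff (K / (N - 1)) (1 - l) (t₁ - t₀) * h t₀ ^ (1 / (N - 1)) +
        sigmaCoeff (K / (N - 1)) l (t₁ - t₀) * h t₁ ^ (1 / (N - 1)) ≤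
      h ((1 - l) * t₀ + l * t₁) ^ (1 / (N - 1))

/-- The inverse of `coth` on `(1,∞)`: `arcoth(x) = (1/2)·log((x+1)/(x−1))`. -/
def arcoth (x : ℝ) : ℝ := 1 / 2 * Real.log ((x + 1) / (x - 1))

/-- The model diameter bound `D_{K,N,H₀}` (for `K = 0, H₀ < 0` and
`K < 0, H₀ < −√(−K(N−1))`). -/
def modelDiameter (K N H₀ : ℝ) : ℝ :=
  if K = 0 then (N - 1) / (-H₀)
  else Real.sqrt ((N - 1) / (-K)) * arcoth (-H₀ / Real.sqrt (-K * (N - 1)))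

open Set Filter

lemma slope_aux {F : ℝ → ℝ} {F' : ℝ} (hF : HasDerivWithinAt F F' (Set.Ici 0) 0)
    (h0 : F 0 = 0) (hp : ∀ᶠ l in nhdsWithin 0 (Set.Ioi 0), 0 ≤ F l) : 0 ≤ F' := by
  rw [hasDerivWithinAt_iff_tendsto_slope, Set.Ici_sdiff_left] at hF
  refine ge_of_tendsto hF ?_
  filter_upwards [hp, self_mem_nhdsWithin] with l hl hl'
  have : slope F 0 l = F l / l := by simp [slope_def_field, h0]
  rw [this]
  exact div_nonneg hl (le_of_lt hl')

set_option maxHeartbeats 1000000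

open Set Filter

/-- One-dimensional Hawking-type bound: under `(K = 0, H₀ < 0)` or
`(K < 0, H₀ < −√(−K(N−1)))`, a positive `(K,N)`-convex density on `[0,T)` with
right derivative at `0` at most `H₀·h(0)` forces `T ≤ D_{K,N,H₀}`. -/
theorem hawking_type_bound (K N H₀ : ℝ) (hN : 1 < N)
    (hcase : (K = 0 ∧ H₀ < 0) ∨ (K < 0 ∧ H₀ < -Real.sqrt (-K * (N - 1))))
    (T : ℝ) (hT : 0 < T)
    (h : ℝ → ℝ) (hpos : ∀ t ∈ Set.Ico (0 : ℝ) T, 0 < h t)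
    (hconv : KNConvexOn K N (Set.Ico 0 T) h)
    (d : ℝ) (hder : HasDerivWithinAt h d (Set.Ici (0 : ℝ)) 0) (hdH : d ≤ H₀ * h 0) :
    T ≤ modelDiameter K N H₀ := by
  have hN1' : (0:ℝ) < N - 1 := by linarith
  obtain ⟨p, hp⟩ : ∃ p : ℝ, p = 1 / (N - 1) := ⟨_, rfl⟩
  have hppos : 0 < p := by rw [hp]; positivity
  have hp1 : p * (N - 1) = 1 := by rw [hp]; exact one_div_mul_cancel hN1'.ne'
  have h0pos : 0 < h 0 := hpos 0 ⟨le_refl 0, hT⟩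
  have hgpos0 : True := trivial
  have h0ppos : 0 < h 0 ^ p := Real.rpow_pos_of_pos h0pos p
  have hpow : h 0 ^ (p - 1) * h 0 = h 0 ^ p := by
    rw [← Real.rpow_add_one h0pos.ne' (p - 1)]; norm_num
  have key : ∀ t, 0 < t → t < T → t ≤ modelDiameter K N H₀ := by
    intro t ht0 htT
    have htmem : t ∈ Set.Ico (0:ℝ) T := ⟨ht0.le, htT⟩
    have htpos : 0 < h t := hpos t htmem
    have htppos : 0 < h t ^ p := Real.rpow_pos_of_pos htpos p
    -- derivative of l ↦ h (l*t) ^ p within Ici 0 at 0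
    have hg : HasDerivWithinAt (fun l => h (l * t) ^ p) (d * p * h 0 ^ (p - 1) * t)
        (Set.Ici 0) 0 := by
      have h1 : HasDerivWithinAt (fun x => h x ^ p) (d * p * h 0 ^ (p - 1))
          (Set.Ici 0) ((0:ℝ) * t) := by
        rw [zero_mul]; exact hder.rpow_const (Or.inl h0pos.ne')
      have h2 : HasDerivWithinAt (fun l : ℝ => l * t) t (Set.Ici 0) 0 :=
        (hasDerivAt_mul_const t).hasDerivWithinAt
      have h3 : Set.MapsTo (fun l : ℝ => l * t) (Set.Ici 0) (Set.Ici 0) :=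
        fun x hx => mul_nonneg hx ht0.le
      exact h1.comp (0:ℝ) h2 h3
    rcases hcase with ⟨hK0, hH0⟩ | ⟨hKneg, hH0⟩
    · -- case K = 0
      have hlin : HasDerivAt (fun l : ℝ => (1 - l) * h 0 ^ p) (-1 * h 0 ^ p) 0 :=
        ((hasDerivAt_id (0:ℝ)).const_sub 1).mul_const _
      have hF : HasDerivWithinAt (fun l => h (l * t) ^ p - (1 - l) * h 0 ^ p)
          (d * p * h 0 ^ (p - 1) * t - -1 * h 0 ^ p) (Set.Ici 0) 0 :=
        hg.sub hlin.hasDerivWithinAt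
      have hF0 : h ((0:ℝ) * t) ^ p - (1 - (0:ℝ)) * h 0 ^ p = 0 := by norm_num
      have hFpos : ∀ᶠ l in nhdsWithin 0 (Set.Ioi 0),
          0 ≤ h (l * t) ^ p - (1 - l) * h 0 ^ p := by
        filter_upwards [Ioo_mem_nhdsGT_of_mem (Set.mem_Ico.2 ⟨le_rfl, one_pos⟩)] with l hl
        obtain ⟨hl0, hl1⟩ := hl
        have hcv := hconv 0 ⟨le_rfl, hT⟩ t htmem ht0 l ⟨hl0.le, hl1.le⟩
        have hσ : ∀ s, sigmaCoeff (K / (N - 1)) s (t - 0) = s := by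
          intro s; simp [sigmaCoeff, hK0]
        rw [hσ, hσ] at hcv
        simp only [mul_zero, zero_add, sub_zero] at hcv
        rw [← hp] at hcv
        nlinarith [hcv, htppos, hl0]
      have hslope := slope_aux hF hF0 hFpos
      have pr : d * (p * h 0 ^ (p - 1) * t) ≤ H₀ * h 0 * (p * h 0 ^ (p - 1) * t) :=
        mul_le_mul_of_nonneg_right hdH
          (mul_nonneg (mul_nonneg hppos.le (Real.rpow_nonneg h0pos.le _)) ht0.le)
      have e1 : 0 ≤ H₀ * (h 0 ^ (p - 1) * h 0) * p * t + h 0 ^ p := by linarith [hslope, pr]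
      rw [hpow] at e1
      have e2 : 0 ≤ H₀ * p * t + 1 := by
        by_contra hcon
        push_neg at hcon
        nlinarith [e1, h0ppos]
      rw [modelDiameter, if_pos hK0, le_div_iff₀ (by linarith : (0:ℝ) < -H₀)]
      have e3 : 0 ≤ (H₀ * p * t + 1) * (N - 1) := mul_nonneg e2 hN1'.le
      have heq : H₀ * p * t * (N - 1) = H₀ * t * (p * (N - 1)) := by ring
      rw [hp1, mul_one] at heq
      linarith [e3, heq]
    · -- case K < 0
      have hKN : (0:ℝ) < -K / (N - 1) := div_pos (by linarith) hN1'
      obtain ⟨a, ha⟩ : ∃ a : ℝ, a = Real.sqrt (-K / (N - 1)) := ⟨_, rfl⟩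
      have hapos : 0 < a := ha ▸ Real.sqrt_pos.2 hKN
      have ha2 : a ^ 2 = -K / (N - 1) := by rw [ha]; exact Real.sq_sqrt hKN.le
      have hsq : Real.sqrt (-K * (N - 1)) = (N - 1) * a := by
        rw [show -K * (N - 1) = ((N - 1) * a) ^ 2 by rw [mul_pow, ha2]; field_simp,
          Real.sqrt_sq (by positivity)]
      have hκ : K / (N - 1) < 0 := div_neg_of_neg_of_pos hKneg hN1'
      have hsqrtκ : Real.sqrt (-(K / (N - 1))) = a := by rw [ha, neg_div]
      obtain ⟨S, hS⟩ : ∃ S : ℝ, S = Real.sinh (t * a) := ⟨_, rfl⟩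
      have hSpos : 0 < S := hS ▸ Real.sinh_pos_iff.2 (mul_pos ht0 hapos)
      -- derivative of the comparison term
      have h_in : HasDerivAt (fun l : ℝ => (1 - l) * t * a) (-1 * t * a) 0 :=
        (((hasDerivAt_id (0:ℝ)).const_sub 1).mul_const t).mul_const a
      have h_sinh := ((h_in.sinh.div_const S).mul_const (h 0 ^ p)).hasDerivWithinAt (s := Set.Ici 0)
      have hF : HasDerivWithinAt
          (fun l => h (l * t) ^ p - Real.sinh ((1 - l) * t * a) / S * h 0 ^ p)
          (d * p * h 0 ^ (p - 1) * t -
            Real.cosh ((1 - (0:ℝ)) * t * a) * (-1 * t * a) / S * h 0 ^ p)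
          (Set.Ici 0) 0 := hg.sub h_sinh
      have hF0 : h ((0:ℝ) * t) ^ p -
          Real.sinh ((1 - (0:ℝ)) * t * a) / S * h 0 ^ p = 0 := by
        rw [hS]
        norm_num
        rw [div_self (Real.sinh_pos_iff.2 (mul_pos ht0 hapos)).ne']
        norm_num
      have hFpos : ∀ᶠ l in nhdsWithin 0 (Set.Ioi 0),
          0 ≤ h (l * t) ^ p - Real.sinh ((1 - l) * t * a) / S * h 0 ^ p := by
        filter_upwards [Ioo_mem_nhdsGT_of_mem (Set.mem_Ico.2 ⟨le_rfl, one_pos⟩)] with l hl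
        obtain ⟨hl0, hl1⟩ := hl
        have hcv := hconv 0 ⟨le_rfl, hT⟩ t htmem ht0 l ⟨hl0.le, hl1.le⟩
        simp only [sigmaCoeff, if_neg (not_lt.2 hκ.le), if_neg hκ.ne, hsqrtκ, sub_zero,
          mul_zero, zero_add] at hcv
        rw [← hp, ← hS] at hcv
        have hpos2 : 0 < Real.sinh (l * t * a) / S * h t ^ p := by
          apply mul_pos (div_pos (Real.sinh_pos_iff.2 (by positivity)) hSpos) htppos
        linarith [hcv, hpos2]
      have hslope := slope_aux hF hF0 hFpos
      rw [show (1 - (0:ℝ)) * t * a = t * a by ring] at hslope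
      obtain ⟨x, hx⟩ : ∃ x : ℝ, x = t * a := ⟨_, rfl⟩
      rw [← hx] at hslope
      obtain ⟨c, hc⟩ : ∃ c : ℝ, c = -H₀ / Real.sqrt (-K * (N - 1)) := ⟨_, rfl⟩
      have hc' : c = -H₀ / ((N - 1) * a) := by rw [hc, hsq]
      have hc1 : 1 < c := by
        rw [hc', lt_div_iff₀ (mul_pos hN1' hapos), one_mul]
        rw [hsq] at hH0
        linarith
      -- turn the slope inequality into cosh x ≥ c sinh x
      have e0 : Real.cosh x * (-1 * t * a) / S * h 0 ^ p ≤ d * p * h 0 ^ (p - 1) * t := by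
        linarith [hslope]
      rw [div_mul_eq_mul_div, div_le_iff₀ hSpos] at e0
      have e1 : 0 ≤ d * p * h 0 ^ (p - 1) * t * S + Real.cosh x * (t * a) * h 0 ^ p := by
        linarith [e0]
      have pr : d * (p * h 0 ^ (p - 1) * t * S) ≤ H₀ * h 0 * (p * h 0 ^ (p - 1) * t * S) :=
        mul_le_mul_of_nonneg_right hdH
          (mul_nonneg (mul_nonneg (mul_nonneg hppos.le (Real.rpow_nonneg h0pos.le _)) ht0.le)
            hSpos.le)
      have e3 : 0 ≤ H₀ * (h 0 ^ (p - 1) * h 0) * p * t * S + Real.cosh x * (t * a) * h 0 ^ p := by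
        linarith [e1, pr]
      rw [hpow] at e3
      have e5 : 0 ≤ H₀ * p * S + Real.cosh x * a := by
        by_contra hcon
        push_neg at hcon
        nlinarith [e3, mul_pos h0ppos ht0, hcon]
      have e6 : 0 ≤ (H₀ * p * S + Real.cosh x * a) * (N - 1) := mul_nonneg e5 hN1'.le
      have heq : H₀ * p * S * (N - 1) = H₀ * S * (p * (N - 1)) := by ring
      rw [hp1, mul_one] at heq
      have e7 : 0 ≤ H₀ * S + Real.cosh x * a * (N - 1) := by linarith [e6, heq]
      have hcS : c * S ≤ Real.cosh x := by
        rw [hc', div_mul_eq_mul_div, div_le_iff₀ (mul_pos hN1' hapos)]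
        linarith [e7]
      -- convert to bound on x
      have hSx : S = Real.sinh x := by rw [hS, hx]
      rw [hSx] at hcS
      have hexp : (c - 1) * Real.exp x ≤ (c + 1) * Real.exp (-x) := by
        rw [Real.cosh_eq, Real.sinh_eq] at hcS
        linarith [hcS]
      have hprod : Real.exp (-x) * Real.exp x = 1 := by
        rw [← Real.exp_add]; simp
      have hxx : Real.exp x * Real.exp x ≤ (c + 1) / (c - 1) := by
        rw [le_div_iff₀ (by linarith : (0:ℝ) < c - 1)]
        have h2 : (c + 1) * Real.exp (-x) * Real.exp x = c + 1 := by
          rw [mul_assoc, hprod, mul_one]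
        linarith [mul_le_mul_of_nonneg_right hexp (Real.exp_pos x).le, h2]
      have h2x : 2 * x ≤ Real.log ((c + 1) / (c - 1)) := by
        rw [Real.le_log_iff_exp_le (div_pos (by linarith) (by linarith))]
        rw [two_mul, Real.exp_add]
        exact hxx
      rw [modelDiameter, if_neg hKneg.ne, ← hc, arcoth]
      have hainv : Real.sqrt ((N - 1) / (-K)) = a⁻¹ := by
        rw [show (N - 1) / (-K) = (-K / (N - 1))⁻¹ by rw [inv_div], Real.sqrt_inv, ← ha]
      rw [hainv]
      have hta : t * a ≤ Real.log ((c + 1) / (c - 1)) / 2 := by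
        rw [← hx]; linarith
      have := (le_div_iff₀ hapos).2 hta
      calc t ≤ Real.log ((c + 1) / (c - 1)) / 2 / a := this
        _ = a⁻¹ * (1 / 2 * Real.log ((c + 1) / (c - 1))) := by
            ring
  by_contra hlt
  push_neg at hlt
  have ht1 : max (T / 2) ((modelDiameter K N H₀ + T) / 2) < T :=
    max_lt (by linarith) (by linarith)
  have ht0 : 0 < max (T / 2) ((modelDiameter K N H₀ + T) / 2) :=
    lt_of_lt_of_le (by linarith) (le_max_left _ _)
  have := key _ ht0 ht1
  have : modelDiameter K N H₀ < max (T / 2) ((modelDiameter K N H₀ + T) / 2) :=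
    lt_of_lt_of_le (by linarith) (le_max_right _ _)
  linarith [key _ ht0 ht1]
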